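/- Let I be a graded ideal of R with I_e ≠ R_e, where e is the identity of G. Suppose that the subring R_e is not a local ring and that for each a ∈ I_e the ideal (φ(I) :_{R_e} a) = {r ∈ R_e : ra ∈ φ(I)} is not a maximal ideal of R_e. Then I is an e-φ-prime ideal of R if and only if I is an e-φ-1-absorbing prime ideal of R. -/

import Mathlib

/-- The underlying set of an element of `GI(R) ∪ {∅}`: `none` plays the role of `∅`. -/
def phiSet {ι R : Type*} [AddGroup ι] [DecidableEq ι] [CommRing R]
    (𝒜 : ι → AddSubgroup R) [GradedRing 𝒜]
    (o : Option (HomogeneousIdeal 𝒜)) : Set R :=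
  {x | ∃ J ∈ o, x ∈ J}

/-- `I_g = I ∩ R_g`, the `g`-th graded piece of the graded ideal `I`. -/
def piece {ι R : Type*} [AddGroup ι] [DecidableEq ι] [CommRing R]
    (𝒜 : ι → AddSubgroup R) [GradedRing 𝒜]
    (I : HomogeneousIdeal 𝒜) (g : ι) : Set R :=
  (I.toIdeal : Set R) ∩ (𝒜 g)

/-- Let `I` be a graded ideal of `R` with `I_e ≠ R_e`. Suppose the subring `R_e` is not a
local ring and that for each `a ∈ I_e` the set `(φ(I) :_{R_e} a)` is not a maximal ideal
of `R_e`. Then `I` is an `e`-`φ`-prime ideal of `R` if and only if `I` is an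
`e`-`φ`-1-absorbing prime ideal of `R`. -/
theorem stmt11 {ι R : Type*} [AddGroup ι] [DecidableEq ι] [CommRing R] [Nontrivial R]
    (𝒜 : ι → AddSubgroup R) [GradedRing 𝒜]
    (φ : HomogeneousIdeal 𝒜 → Option (HomogeneousIdeal 𝒜))
    (hφ : ∀ J : HomogeneousIdeal 𝒜, phiSet 𝒜 (φ J) ⊆ (J.toIdeal : Set R))
    (I : HomogeneousIdeal 𝒜) (hproper : piece 𝒜 I (0 : ι) ≠ ((𝒜 0 : AddSubgroup R) : Set R))
    (hnotlocal : ¬ IsLocalRing (𝒜 (0 : ι)))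
    (hnotmax : ∀ a ∈ piece 𝒜 I (0 : ι),
      ¬ ∃ M : Ideal (𝒜 (0 : ι)), M.IsMaximal ∧
        (M : Set (𝒜 (0 : ι))) = {r : 𝒜 (0 : ι) | (r : R) * a ∈ phiSet 𝒜 (φ I)}) :
    (∀ a b : R, a ∈ 𝒜 (0 : ι) → b ∈ 𝒜 (0 : ι) →
        a * b ∈ I.toIdeal → a * b ∉ phiSet 𝒜 (φ I) → a ∈ I.toIdeal ∨ b ∈ I.toIdeal) ↔
      (∀ a b c : R, a ∈ 𝒜 (0 : ι) → b ∈ 𝒜 (0 : ι) → c ∈ 𝒜 (0 : ι) →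
        ¬IsUnit a → ¬IsUnit b → ¬IsUnit c →
        a * b * c ∈ I.toIdeal → a * b * c ∉ phiSet 𝒜 (φ I) →
        a * b ∈ I.toIdeal ∨ c ∈ I.toIdeal) := by
  constructor
  · -- e-φ-prime → e-φ-1-absorbing prime
    intro hp a b c ha hb hc _ _ _ habc hnph
    have hab : a * b ∈ 𝒜 (0 : ι) := by
      have := SetLike.mul_mem_graded ha hb
      rwa [add_zero] at this
    exact hp (a * b) c hab hc habc hnph
  · -- e-φ-1-absorbing prime → e-φ-prime
    intro habs a b ha hb hab hnph
    by_contra hcon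
    push_neg at hcon
    obtain ⟨hna, hnb⟩ := hcon
    -- a, b must be nonunits of R
    have hua : ¬ IsUnit a := by
      intro h
      obtain ⟨u, rfl⟩ := h
      refine hnb ?_
      have hb' : b = ↑u⁻¹ * (↑u * b) := by rw [← mul_assoc, Units.inv_mul, one_mul]
      rw [hb']
      exact I.toIdeal.mul_mem_left _ hab
    have hub : ¬ IsUnit b := by
      intro h
      obtain ⟨u, rfl⟩ := h
      refine hna ?_
      have ha' : a = ↑u⁻¹ * (a * ↑u) := by
        rw [mul_comm a (↑u : R), ← mul_assoc, Units.inv_mul, one_mul]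
      rw [ha']
      exact I.toIdeal.mul_mem_left _ hab
    haveI : Nontrivial (𝒜 (0 : ι)) :=
      ⟨⟨0, 1, fun h => zero_ne_one (α := R) (congrArg Subtype.val h)⟩⟩
    -- units of R lying in grade zero are units of the grade-zero ring
    have gz : ∀ c : 𝒜 (0 : ι), IsUnit (c : R) → IsUnit c := by
      intro c h
      obtain ⟨u, hu⟩ := h
      have hcd : (c : R) * ↑u⁻¹ = 1 := by rw [← hu]; exact u.mul_inv
      set d : R := ↑u⁻¹
      have h1 := DirectSum.coe_decompose_mul_add_of_left_mem 𝒜 (i := (0 : ι)) (j := (0 : ι))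
        c.2 (b := d)
      rw [zero_add, hcd, DirectSum.decompose_of_mem_same 𝒜 (SetLike.one_mem_graded 𝒜)] at h1
      exact IsUnit.of_mul_eq_one (a := c) (DirectSum.decompose 𝒜 d 0) (Subtype.ext h1.symm)
    -- the ideal N = (I :_{R_e} a) ∩ (I :_{R_e} b)
    set N : Ideal (𝒜 (0 : ι)) :=
      { carrier := {c : 𝒜 (0 : ι) | (c : R) * a ∈ I.toIdeal ∧ (c : R) * b ∈ I.toIdeal}
        add_mem' := fun {x y} hx hy => by
          refine ⟨?_, ?_⟩
          · rw [show ((x + y : 𝒜 (0 : ι)) : R) = (x : R) + (y : R) from rfl, add_mul]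
            exact add_mem hx.1 hy.1
          · rw [show ((x + y : 𝒜 (0 : ι)) : R) = (x : R) + (y : R) from rfl, add_mul]
            exact add_mem hx.2 hy.2
        zero_mem' := by
          constructor <;>
            · rw [show ((0 : 𝒜 (0 : ι)) : R) = 0 from rfl, zero_mul]
              exact zero_mem _
        smul_mem' := fun c x hx => by
          refine ⟨?_, ?_⟩
          · rw [show ((c • x : 𝒜 (0 : ι)) : R) = (c : R) * (x : R) from rfl, mul_assoc]
            exact I.toIdeal.mul_mem_left _ hx.1
          · rw [show ((c • x : 𝒜 (0 : ι)) : R) = (c : R) * (x : R) from rfl, mul_assoc]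
            exact I.toIdeal.mul_mem_left _ hx.2 } with hNdef
    have memN : ∀ c : 𝒜 (0 : ι),
        c ∈ N ↔ ((c : R) * a ∈ I.toIdeal ∧ (c : R) * b ∈ I.toIdeal) := fun c => Iff.rfl
    -- key: a nonunit c with c(ab) ∉ φ(I) lies in N
    have key : ∀ c : 𝒜 (0 : ι), ¬ IsUnit (c : R) →
        (c : R) * (a * b) ∉ phiSet 𝒜 (φ I) → c ∈ N := by
      intro c hcu hcnph
      have h1 : (c : R) * a * b ∈ I.toIdeal := by
        rw [mul_assoc]; exact I.toIdeal.mul_mem_left _ hab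
      have h1' : (c : R) * a * b ∉ phiSet 𝒜 (φ I) := by rw [mul_assoc]; exact hcnph
      have h2 : (c : R) * b * a ∈ I.toIdeal := by
        rw [mul_assoc, mul_comm b a]; exact I.toIdeal.mul_mem_left _ hab
      have h2' : (c : R) * b * a ∉ phiSet 𝒜 (φ I) := by
        rw [mul_assoc, mul_comm b a]; exact hcnph
      rcases habs (c : R) a b c.2 ha hb hcu hua hub h1 h1' with h | h
      · rcases habs (c : R) b a c.2 hb ha hcu hub hua h2 h2' with h' | h'
        · exact ⟨h, h'⟩
        · exact absurd h' hna
      · exact absurd h hnb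
    -- members of N are nonunits of the grade-zero ring
    have NU : ∀ c : 𝒜 (0 : ι), c ∈ N → ¬ IsUnit c := by
      intro c hc hu
      obtain ⟨v, rfl⟩ := hu
      refine hna ?_
      have ha' : a = ((↑v⁻¹ : 𝒜 (0 : ι)) : R) * (((v : 𝒜 (0 : ι)) : R) * a) := by
        rw [← mul_assoc,
          show ((↑v⁻¹ : 𝒜 (0 : ι)) : R) * ((v : 𝒜 (0 : ι)) : R)
            = ((↑v⁻¹ * ↑v : 𝒜 (0 : ι)) : R) from rfl, v.inv_mul]
        rw [show ((1 : 𝒜 (0 : ι)) : R) = 1 from rfl, one_mul]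
      rw [ha']
      exact I.toIdeal.mul_mem_left _ hc.1
    rcases hJ : φ I with _ | J
    · -- φ(I) = ∅ : every nonunit of R_e lies in N, so R_e is local, contradiction
      refine hnotlocal ⟨fun {x y} hxy => ?_⟩
      by_contra hcontra
      push_neg at hcontra
      obtain ⟨hx, hy⟩ := hcontra
      have hx' : x ∈ N := key x (fun h => hx (gz x h)) (by rw [hJ]; simp [phiSet])
      have hy' : y ∈ N := key y (fun h => hy (gz y h)) (by rw [hJ]; simp [phiSet])
      have h1 : (1 : 𝒜 (0 : ι)) ∈ N := hxy ▸ add_mem hx' hy'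
      exact NU 1 h1 isUnit_one
    · -- φ(I) = J
      have hps : phiSet 𝒜 (φ I) = (J.toIdeal : Set R) := by
        rw [hJ]; ext x; simp [phiSet]
      -- the colon ideal D = (φ(I) :_{R_e} ab)
      set D : Ideal (𝒜 (0 : ι)) :=
        { carrier := {c : 𝒜 (0 : ι) | (c : R) * (a * b) ∈ J.toIdeal}
          add_mem' := fun {x y} hx hy => by
            rw [Set.mem_setOf_eq,
              show ((x + y : 𝒜 (0 : ι)) : R) = (x : R) + (y : R) from rfl, add_mul]
            exact add_mem hx hy
          zero_mem' := by
            rw [Set.mem_setOf_eq, show ((0 : 𝒜 (0 : ι)) : R) = 0 from rfl, zero_mul]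
            exact zero_mem _
          smul_mem' := fun c x hx => by
            rw [Set.mem_setOf_eq,
              show ((c • x : 𝒜 (0 : ι)) : R) = (c : R) * (x : R) from rfl, mul_assoc]
            exact J.toIdeal.mul_mem_left _ hx } with hDdef
      have memD : ∀ c : 𝒜 (0 : ι), c ∈ D ↔ (c : R) * (a * b) ∈ J.toIdeal := fun c => Iff.rfl
      have hD1 : (1 : 𝒜 (0 : ι)) ∉ D := by
        intro h
        rw [memD, show ((1 : 𝒜 (0 : ι)) : R) = 1 from rfl, one_mul] at h
        exact hnph (by rw [hps]; exact h)
      have hDne : D ≠ ⊤ := fun h => hD1 (h ▸ Submodule.mem_top)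
      have hab0 : a * b ∈ 𝒜 (0 : ι) := by
        have := SetLike.mul_mem_graded ha hb
        rwa [add_zero] at this
      have hDnotmax : ¬ D.IsMaximal := by
        intro h
        refine hnotmax (a * b) ⟨hab, hab0⟩ ⟨D, h, ?_⟩
        ext r
        rw [SetLike.mem_coe, memD, Set.mem_setOf_eq, hps, SetLike.mem_coe]
      obtain ⟨M0, hM0max, hDM0⟩ := Ideal.exists_le_maximal D hDne
      have hsub : (M0 : Set (𝒜 (0 : ι))) ⊆ (D : Set (𝒜 (0 : ι))) ∪ (N : Set (𝒜 (0 : ι))) := by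
        intro x hx
        have hxu : ¬ IsUnit x := fun hu => hM0max.ne_top (M0.eq_top_of_isUnit_mem hx hu)
        by_cases hxD : x ∈ D
        · exact Or.inl hxD
        · exact Or.inr (key x (fun h => hxu (gz x h)) (by rw [hps]; exact hxD))
      rcases Ideal.subset_union.mp hsub with h | h
      · refine hDnotmax ?_
        have hDeq : D = M0 := le_antisymm hDM0 h
        rw [hDeq]; exact hM0max
      · -- every nonunit lies in N, so R_e is local, contradiction
        refine hnotlocal ⟨fun {x y} hxy => ?_⟩
        by_contra hcontra
        push_neg at hcontra
        obtain ⟨hx, hy⟩ := hcontra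
        have mem : ∀ z : 𝒜 (0 : ι), ¬ IsUnit z → z ∈ N := by
          intro z hz
          by_cases hzD : z ∈ D
          · exact h (hDM0 hzD)
          · exact key z (fun hh => hz (gz z hh)) (by rw [hps]; exact hzD)
        have h1 : (1 : 𝒜 (0 : ι)) ∈ N := hxy ▸ add_mem (mem x hx) (mem y hy)
        exact NU 1 h1 isUnit_one
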